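/- Let X be an inner product space over ℂ, x, y ∈ X and a, A ∈ ℂ with A ≠ −a. If ‖x − ((a+A)/2)•y‖ ≤ (1/2)·|A − a|·‖y‖, then ‖x‖·‖y‖ − |⟨x,y⟩| ≤ (1/4)·(|A − a|²/|A + a|)·‖y‖². -/

import Mathlib

open scoped InnerProductSpace ComplexConjugate

theorem reverse_cbs_additive {X : Type*} [NormedAddCommGroup X]
    [InnerProductSpace ℂ X] (x y : X) (a A : ℂ) (hA : A ≠ -a)
    (h : ‖x - ((a + A) / 2) • y‖ ≤ (1 / 2) * ‖A - a‖ * ‖y‖) :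
    ‖x‖ * ‖y‖ - ‖⟪y, x⟫_ℂ‖ ≤
      (1 / 4) * (‖A - a‖ ^ 2 / ‖A + a‖) * ‖y‖ ^ 2 := by
  set c : ℂ := (a + A) / 2 with hc
  have hAa : A + a ≠ 0 := by
    intro h0
    exact hA (by linear_combination h0)
  have hs : 0 < ‖A + a‖ := by
    simpa using (norm_pos_iff.mpr hAa)
  set s : ℝ := ‖A + a‖ with hsdef
  set d : ℝ := ‖A - a‖ with hddef
  set r : ℝ := ‖⟪y, x⟫_ℂ‖ with hrdef
  have hcabs : ‖c‖ = s / 2 := by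
    rw [hc, norm_div, hsdef, add_comm a A]
    simp
  have hd0 : 0 ≤ d := norm_nonneg _
  have hr0 : 0 ≤ r := norm_nonneg _
  have hexp : ‖x - c • y‖ ^ 2
      = ‖x‖ ^ 2 - 2 * (c * ⟪x, y⟫_ℂ).re + (s / 2) ^ 2 * ‖y‖ ^ 2 := by
    have := @norm_sub_sq ℂ _ _ _ _ x (c • y)
    rw [inner_smul_right, norm_smul] at this
    rw [this]
    simp only [hcabs, RCLike.re_to_complex]
    ring
  have h2 : ‖x - c • y‖ ^ 2 ≤ ((1 / 2) * d * ‖y‖) ^ 2 :=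
    pow_le_pow_left₀ (norm_nonneg _) h 2
  have hre : (c * ⟪x, y⟫_ℂ).re ≤ (s / 2) * r := by
    calc (c * ⟪x, y⟫_ℂ).re ≤ ‖c * ⟪x, y⟫_ℂ‖ := Complex.re_le_norm _
      _ = (s / 2) * r := by
          rw [norm_mul, hcabs, hrdef, ← inner_conj_symm y x, Complex.norm_conj]
  have hkey : ‖x‖ ^ 2 + (s / 2) ^ 2 * ‖y‖ ^ 2 ≤ (1 / 4) * d ^ 2 * ‖y‖ ^ 2 + s * r := by
    nlinarith [hexp, h2, hre]
  have hamgm : (‖x‖ - (s / 2) * ‖y‖) ^ 2 ≥ 0 := sq_nonneg _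
  have hfin : ‖x‖ * ‖y‖ - r ≤ (1 / 4) * d ^ 2 * ‖y‖ ^ 2 / s := by
    rw [le_div_iff₀ hs]
    nlinarith [hkey, hamgm, hs]
  calc ‖x‖ * ‖y‖ - r ≤ (1 / 4) * d ^ 2 * ‖y‖ ^ 2 / s := hfin
    _ = (1 / 4) * (d ^ 2 / s) * ‖y‖ ^ 2 := by ring
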